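/- Let n ≥ 2, let θ : Fin n → ℝ, and let π be a random permutation of {1,…,n} distributed according to the Plackett-Luce distribution with logits θ. Then for any distinct indices i, j, the probability that i precedes j in π equals exp(θ_i) / (exp(θ_i) + exp(θ_j)); that is, Σ_{π : π⁻¹(i) < π⁻¹(j)} ∏_{k=1}^n exp(θ_{π_k}) / (Σ_{u=k}^n exp(θ_{π_u})) = exp(θ_i)/(exp(θ_i)+exp(θ_j)). -/

import Mathlib

open Finset

/-- The Plackett-Luce probability of a permutation `π` of `{1,…,n}` (modeled as
`Fin n`, where `π k` is the item ranked at position `k`) with logits `θ`: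
`p(π|θ) = ∏_{k=1}^n exp(θ_{π_k}) / (Σ_{u=k}^n exp(θ_{π_u}))`. -/
noncomputable def plackettLuce {n : ℕ} (θ : Fin n → ℝ) (π : Equiv.Perm (Fin n)) : ℝ :=
  ∏ k : Fin n,
    Real.exp (θ (π k)) / ∑ u ∈ Finset.univ.filter (fun u => k ≤ u), Real.exp (θ (π u))

private lemma filter_succ_le (n : ℕ) (k : Fin n) :
    (Finset.univ.filter (fun u : Fin (n+1) => k.succ ≤ u))
      = Finset.image Fin.succ (Finset.univ.filter (fun v : Fin n => k ≤ v)) := by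
  ext u
  simp only [Finset.mem_filter, Finset.mem_image, Finset.mem_univ, true_and]
  constructor
  · intro h
    have hu : u ≠ 0 := by
      intro h0; subst h0
      exact absurd h (by simp [Fin.le_def])
    refine ⟨u.pred hu, ?_, Fin.succ_pred _ _⟩
    rw [← Fin.succ_le_succ_iff, Fin.succ_pred]; exact h
  · rintro ⟨v, hv, rfl⟩; exact Fin.succ_le_succ_iff.mpr hv

private lemma plackettLuce_decompose {n : ℕ} (θ : Fin (n+1) → ℝ) (a : Fin (n+1))
    (σ : Equiv.Perm (Fin n)) :
    plackettLuce θ (Equiv.Perm.decomposeFin.symm (a, σ))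
      = (Real.exp (θ a) / ∑ u : Fin (n+1), Real.exp (θ u))
        * plackettLuce (fun u => θ (Equiv.swap 0 a u.succ)) σ := by
  unfold plackettLuce
  rw [Fin.prod_univ_succ]
  congr 1
  · rw [Equiv.Perm.decomposeFin_symm_apply_zero]
    congr 1
    have h0 : (Finset.univ.filter (fun u : Fin (n+1) => (0:Fin (n+1)) ≤ u)) = Finset.univ := by
      simp [Fin.zero_le]
    rw [h0]
    exact Equiv.sum_comp (Equiv.Perm.decomposeFin.symm (a,σ)) (fun x => Real.exp (θ x))
  · apply Finset.prod_congr rfl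
    intro k _
    rw [Equiv.Perm.decomposeFin_symm_apply_succ]
    congr 1
    rw [filter_succ_le, Finset.sum_image (fun x _ y _ h => Fin.succ_injective _ h)]
    apply Finset.sum_congr rfl
    intro v _
    rw [Equiv.Perm.decomposeFin_symm_apply_succ]

private lemma plackettLuce_sum_one : ∀ (n : ℕ) (θ : Fin n → ℝ),
    ∑ π : Equiv.Perm (Fin n), plackettLuce θ π = 1 := by
  intro n
  induction n with
  | zero =>
    intro θ
    rw [Finset.sum_eq_single 1 (fun b _ hb => absurd (Subsingleton.elim b 1) hb)
      (fun h => absurd (Finset.mem_univ 1) h)]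
    simp [plackettLuce]
  | succ n ih =>
    intro θ
    rw [← Equiv.sum_comp Equiv.Perm.decomposeFin.symm (plackettLuce θ), Fintype.sum_prod_type]
    have hW : (0:ℝ) < ∑ u : Fin (n+1), Real.exp (θ u) :=
      Finset.sum_pos (fun _ _ => Real.exp_pos _) ⟨0, Finset.mem_univ 0⟩
    simp_rw [plackettLuce_decompose, ← Finset.mul_sum, ih, mul_one]
    rw [← Finset.sum_div, div_self hW.ne']

private lemma decomp_symm_ne {n : ℕ} (a : Fin (n+1)) (σ : Equiv.Perm (Fin n)) (x : Fin (n+1))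
    (h : Equiv.swap 0 a x ≠ 0) :
    (Equiv.Perm.decomposeFin.symm (a, σ)).symm x
      = (σ.symm ((Equiv.swap 0 a x).pred h)).succ := by
  rw [Equiv.symm_apply_eq, Equiv.Perm.decomposeFin_symm_apply_succ, Equiv.apply_symm_apply,
    Fin.succ_pred, Equiv.swap_apply_self]

private lemma decomp_symm_self {n : ℕ} (a : Fin (n+1)) (σ : Equiv.Perm (Fin n)) :
    (Equiv.Perm.decomposeFin.symm (a, σ)).symm a = 0 := by
  rw [Equiv.symm_apply_eq, Equiv.Perm.decomposeFin_symm_apply_zero]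

private lemma swap_ne_zero {n : ℕ} (a x : Fin (n+1)) (hx : x ≠ a) : Equiv.swap 0 a x ≠ 0 := by
  intro h
  apply hx
  have := congrArg (Equiv.swap 0 a) h
  simpa [Equiv.swap_apply_self, Equiv.swap_apply_left] using this

private lemma plackettLuce_key : ∀ (n : ℕ) (θ : Fin n → ℝ) (i j : Fin n), i ≠ j →
    ∑ π ∈ Finset.univ.filter (fun π : Equiv.Perm (Fin n) => π.symm i < π.symm j),
        plackettLuce θ π
      = Real.exp (θ i) / (Real.exp (θ i) + Real.exp (θ j)) := by
  intro n
  induction n with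
  | zero => intro θ i j _; exact i.elim0
  | succ n ih =>
    intro θ i j hij
    have hW : (0:ℝ) < ∑ u : Fin (n+1), Real.exp (θ u) :=
      Finset.sum_pos (fun _ _ => Real.exp_pos _) ⟨0, Finset.mem_univ 0⟩
    have hs : (0:ℝ) < Real.exp (θ i) + Real.exp (θ j) := by positivity
    set W := ∑ u : Fin (n+1), Real.exp (θ u) with hWdef
    set r := Real.exp (θ i) / (Real.exp (θ i) + Real.exp (θ j)) with hrdef
    rw [Finset.sum_filter,
      ← Equiv.sum_comp Equiv.Perm.decomposeFin.symm
        (fun π : Equiv.Perm (Fin (n+1)) => if π.symm i < π.symm j then plackettLuce θ π else 0),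
      Fintype.sum_prod_type]
    have inner : ∀ a : Fin (n+1),
        (∑ σ : Equiv.Perm (Fin n),
          if (Equiv.Perm.decomposeFin.symm (a, σ)).symm i
              < (Equiv.Perm.decomposeFin.symm (a, σ)).symm j
          then plackettLuce θ (Equiv.Perm.decomposeFin.symm (a, σ)) else 0)
        = (Real.exp (θ a) / W) * (if a = i then 1 else if a = j then 0 else r) := by
      intro a
      by_cases hai : a = i
      · subst hai
        have hj : Equiv.swap 0 a j ≠ 0 := swap_ne_zero a j (Ne.symm hij)
        have hc : ∀ σ : Equiv.Perm (Fin n),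
            (Equiv.Perm.decomposeFin.symm (a, σ)).symm a
              < (Equiv.Perm.decomposeFin.symm (a, σ)).symm j := by
          intro σ
          rw [decomp_symm_self, decomp_symm_ne a σ j hj]
          exact Fin.succ_pos _
        simp only [if_pos (hc _)]
        simp_rw [plackettLuce_decompose]
        rw [← Finset.mul_sum, plackettLuce_sum_one, mul_one, ← hWdef]
        simp
      · by_cases haj : a = j
        · subst haj
          have hi : Equiv.swap 0 a i ≠ 0 := swap_ne_zero a i (fun h => hai h.symm)
          have hc : ∀ σ : Equiv.Perm (Fin n),
              ¬ ((Equiv.Perm.decomposeFin.symm (a, σ)).symm i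
                < (Equiv.Perm.decomposeFin.symm (a, σ)).symm a) := by
            intro σ
            rw [decomp_symm_self, decomp_symm_ne a σ i hi]
            exact Fin.not_lt_zero _
          simp only [if_neg (hc _), Finset.sum_const_zero]
          simp [hai]
        · have hi : Equiv.swap 0 a i ≠ 0 := swap_ne_zero a i (fun h => hai h.symm)
          have hj : Equiv.swap 0 a j ≠ 0 := swap_ne_zero a j (fun h => haj h.symm)
          have hij' : (Equiv.swap 0 a i).pred hi ≠ (Equiv.swap 0 a j).pred hj := by
            intro h
            apply hij
            have h2 := congrArg Fin.succ h
            rw [Fin.succ_pred, Fin.succ_pred] at h2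
            exact (Equiv.swap 0 a).injective h2
          simp only [if_neg hai, if_neg haj]
          simp_rw [decomp_symm_ne a _ i hi, decomp_symm_ne a _ j hj, Fin.succ_lt_succ_iff,
            plackettLuce_decompose]
          rw [← Finset.sum_filter, ← Finset.mul_sum,
            ih (fun u => θ (Equiv.swap 0 a u.succ)) _ _ hij']
          simp only [Fin.succ_pred, Equiv.swap_apply_self]
          rfl
    simp_rw [inner]
    have hsub : ({i, j} : Finset (Fin (n+1))) ⊆ Finset.univ := Finset.subset_univ _
    rw [← Finset.sum_sdiff hsub, Finset.sum_pair hij]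
    simp only [if_pos rfl, if_neg (Ne.symm hij), mul_one, mul_zero, add_zero]
    have hA : ∑ a ∈ Finset.univ \ {i, j}, Real.exp (θ a)
        = W - (Real.exp (θ i) + Real.exp (θ j)) := by
      have h2 := Finset.sum_sdiff (f := fun a => Real.exp (θ a)) hsub
      rw [Finset.sum_pair hij] at h2
      rw [hWdef]; linarith
    have hsd : ∑ a ∈ Finset.univ \ {i, j},
        (Real.exp (θ a) / W) * (if a = i then 1 else if a = j then 0 else r)
        = (W - (Real.exp (θ i) + Real.exp (θ j))) * (r / W) := by
      rw [Finset.sum_congr rfl (fun a ha => ?_), ← Finset.sum_mul, hA]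
      have ha' := Finset.mem_sdiff.mp ha
      simp only [Finset.mem_insert, Finset.mem_singleton, not_or] at ha'
      rw [if_neg ha'.2.1, if_neg ha'.2.2]
      ring
    rw [hsd, hrdef]
    field_simp
    simp only [↓reduceIte]
    ring

/-- Under the Plackett-Luce distribution with logits `θ`, for distinct `i j`,
the probability that `i` precedes `j` (i.e. `π⁻¹ i < π⁻¹ j`) equals
`exp θ i / (exp θ i + exp θ j)`. -/
theorem plackettLuce_prob_precedes {n : ℕ} (hn : 2 ≤ n) (θ : Fin n → ℝ)
    (i j : Fin n) (hij : i ≠ j) :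
    ∑ π ∈ Finset.univ.filter (fun π : Equiv.Perm (Fin n) => π.symm i < π.symm j),
        plackettLuce θ π
      = Real.exp (θ i) / (Real.exp (θ i) + Real.exp (θ j)) := by
  exact plackettLuce_key n θ i j hij
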